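/- With q = q₀⋯qₙ and φ as above, the logarithmic heights satisfy q · log wh_K(p) = log H_K(φ(p)) for every p ∈ WP^n_w(K). -/

import Mathlib

/-- With `Q = q₀⋯qₙ` and `φ([x₀:…:xₙ]) = [x₀^{Q/q₀}:…:xₙ^{Q/qₙ}]`, the logarithmic
heights satisfy `Q · log wh_K(p) = log H_K(φ(p))` for every `p ∈ WP^n_w(K)`. -/
theorem log_weighted_height {K : Type*} [Field K] {V : Type*}
    (absv : V → AbsoluteValue K ℝ) (nv : V → ℕ) (hnv : ∀ v, 0 < nv v)
    (hfin : ∀ y : K, y ≠ 0 → {v | absv v y ≠ 1}.Finite)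
    (hprod : ∀ y : K, y ≠ 0 → ∏ᶠ v, absv v y ^ nv v = 1)
    {n : ℕ} (q : Fin (n + 1) → ℕ) (hq : ∀ i, 0 < q i) (Q : ℕ) (hQ : Q = ∏ i, q i)
    (x : Fin (n + 1) → K) (hx : x ≠ 0) :
    (Q : ℝ) * Real.log (∏ᶠ v, Finset.univ.sup' Finset.univ_nonempty
        (fun i => absv v (x i) ^ ((nv v : ℝ) / (q i : ℝ)))) =
      Real.log (∏ᶠ v, Finset.univ.sup' Finset.univ_nonempty
        (fun i => absv v (x i ^ (Q / q i)) ^ nv v)) := by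
  obtain ⟨i₀, hi₀⟩ : ∃ i, x i ≠ 0 := by
    by_contra h; push_neg at h; exact hx (funext h)
  set f : V → ℝ := fun v => Finset.univ.sup' Finset.univ_nonempty
      (fun i => absv v (x i) ^ ((nv v : ℝ) / (q i : ℝ))) with hf
  have hdvd : ∀ i, q i ∣ Q := fun i => hQ ▸ Finset.dvd_prod_of_mem _ (Finset.mem_univ i)
  have hexp : ∀ i, ((Q / q i : ℕ) : ℝ) = (Q : ℝ) / (q i : ℝ) := fun i =>
    Nat.cast_div (hdvd i) (by exact_mod_cast (hq i).ne')
  have hterm : ∀ v i, absv v (x i ^ (Q / q i)) ^ nv v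
      = (absv v (x i) ^ ((nv v : ℝ) / (q i : ℝ))) ^ Q := by
    intro v i
    have h0 : (0:ℝ) ≤ absv v (x i) := (absv v).nonneg _
    rw [map_pow, ← Real.rpow_natCast (absv v (x i)) (Q / q i),
      ← Real.rpow_natCast _ (nv v), ← Real.rpow_natCast _ Q,
      ← Real.rpow_mul h0, ← Real.rpow_mul h0, hexp i]
    congr 1
    have hqne : (q i : ℝ) ≠ 0 := by exact_mod_cast (hq i).ne'
    field_simp
  have hterm0 : ∀ v i, (0:ℝ) ≤ absv v (x i) ^ ((nv v : ℝ) / (q i : ℝ)) := by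
    intro v i
    exact Real.rpow_nonneg ((absv v).nonneg _) _
  have hpt : ∀ v, f v ^ Q = Finset.univ.sup' Finset.univ_nonempty
      (fun i => absv v (x i ^ (Q / q i)) ^ nv v) := by
    intro v
    obtain ⟨j, -, hj⟩ := Finset.exists_mem_eq_sup' Finset.univ_nonempty
      (fun i => absv v (x i) ^ ((nv v : ℝ) / (q i : ℝ)))
    have hle : ∀ k : Fin (n+1), absv v (x k) ^ ((nv v : ℝ) / (q k : ℝ))
        ≤ absv v (x j) ^ ((nv v : ℝ) / (q j : ℝ)) := fun k => by
      rw [← hj]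
      exact Finset.le_sup' (fun i => absv v (x i) ^ ((nv v : ℝ) / (q i : ℝ)))
        (Finset.mem_univ k)
    rw [hf]
    simp only
    rw [hj]
    refine le_antisymm ?_ (Finset.sup'_le _ _ fun k _ => ?_)
    · rw [← hterm v j]
      exact Finset.le_sup' (fun i => absv v (x i ^ (Q / q i)) ^ nv v) (Finset.mem_univ j)
    · rw [hterm v k]
      exact pow_le_pow_left₀ (hterm0 v k) (hle k) Q
  have hsupp : (Function.mulSupport f).Finite := by
    have hS : ∀ i : Fin (n+1), ({v | x i ≠ 0 ∧ absv v (x i) ≠ 1} : Set V).Finite := by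
      intro i
      by_cases h : x i = 0
      · simp [h]
      · exact (hfin (x i) h).subset fun v hv => hv.2
    refine Set.Finite.subset (Set.finite_iUnion hS) ?_
    intro v hv
    by_contra hnot
    simp only [Set.mem_iUnion, Set.mem_setOf_eq, not_exists, not_and] at hnot
    apply hv
    have hone : ∀ i : Fin (n+1), x i ≠ 0 → absv v (x i) = 1 := fun i hi => by
      by_contra h; exact hnot i hi h
    have hval : ∀ i : Fin (n+1), absv v (x i) ^ ((nv v : ℝ) / (q i : ℝ)) ≤ 1 := by
      intro i
      by_cases h : x i = 0
      · rw [h, map_zero, Real.zero_rpow]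
        · norm_num
        · exact div_ne_zero (by exact_mod_cast (hnv v).ne') (by exact_mod_cast (hq i).ne')
      · rw [hone i h, Real.one_rpow]
    show f v = 1
    refine le_antisymm (Finset.sup'_le _ _ fun i _ => hval i) ?_
    have : absv v (x i₀) ^ ((nv v : ℝ) / (q i₀ : ℝ)) = 1 := by
      rw [hone i₀ hi₀, Real.one_rpow]
    calc (1:ℝ) = absv v (x i₀) ^ ((nv v : ℝ) / (q i₀ : ℝ)) := this.symm
      _ ≤ f v := Finset.le_sup' (fun i => absv v (x i) ^ ((nv v : ℝ) / (q i : ℝ)))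
        (Finset.mem_univ i₀)
  calc (Q : ℝ) * Real.log (∏ᶠ v, f v)
      = Real.log ((∏ᶠ v, f v) ^ Q) := (Real.log_pow _ _).symm
    _ = Real.log (∏ᶠ v, f v ^ Q) := by rw [finprod_pow hsupp]
    _ = _ := by simp only [hpt]
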